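/- Let u ∈ Mₙ(ℂ) be a diagonal-normalizing partial isometry that is not itself a diagonal matrix. Then there exists an index i ∈ Fin n such that the (i,i) entry of uᴴ·u equals 1 and E_{ii}·(u·E_{ii}·uᴴ) = 0, where E_{ii} is the rank-one diagonal projection with (i,i) entry 1 and all other entries 0. -/

import Mathlib

open Matrix

/-- A diagonal-normalizing partial isometry in `Mₙ(ℂ)`: a partial isometry `u`
such that `u d uᴴ` and `uᴴ d u` are diagonal for every diagonal matrix `d`. -/
def IsDNPI {n : ℕ} (u : Matrix (Fin n) (Fin n) ℂ) : Prop :=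
  u * uᴴ * u = u ∧
    ∀ d : Matrix (Fin n) (Fin n) ℂ, d.IsDiag → (u * d * uᴴ).IsDiag ∧ (uᴴ * d * u).IsDiag

private lemma stdDiag {n : ℕ} (i : Fin n) : (Matrix.single i i (1:ℂ)).IsDiag := by
  intro a b hab
  simp only [Matrix.single, of_apply, ite_eq_right_iff, and_imp]
  rintro rfl rfl; exact absurd rfl hab

private lemma uEuH {n : ℕ} (u : Matrix (Fin n) (Fin n) ℂ) (i a b : Fin n) :
    (u * Matrix.single i i (1:ℂ) * uᴴ) a b = u a i * star (u b i) := by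
  simp [Matrix.mul_apply, Matrix.single, conjTranspose_apply, ite_and, Finset.sum_ite_eq,
    Finset.sum_ite_eq', mul_ite, ite_mul, zero_mul, mul_zero]

private lemma uHEu {n : ℕ} (u : Matrix (Fin n) (Fin n) ℂ) (i a b : Fin n) :
    (uᴴ * Matrix.single i i (1:ℂ) * u) a b = star (u i a) * u i b := by
  simp [Matrix.mul_apply, Matrix.single, conjTranspose_apply, ite_and, Finset.sum_ite_eq,
    Finset.sum_ite_eq', mul_ite, ite_mul, zero_mul, mul_zero]

/-- If `u ∈ Mₙ(ℂ)` is a diagonal-normalizing partial isometry which is not itself diagonal,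
then there is an index `i` with `(uᴴ u) i i = 1` and `E_{ii} · (u · E_{ii} · uᴴ) = 0`. -/
theorem exists_orthogonal_diag_projection {n : ℕ} (u : Matrix (Fin n) (Fin n) ℂ)
    (hu : IsDNPI u) (hd : ¬ u.IsDiag) :
    ∃ i : Fin n, (uᴴ * u) i i = 1 ∧
      Matrix.single i i (1 : ℂ) * (u * Matrix.single i i (1 : ℂ) * uᴴ) = 0 := by
  obtain ⟨hpi, hnorm⟩ := hu
  obtain ⟨k, j, hkj, hukj⟩ : ∃ k j, k ≠ j ∧ u k j ≠ 0 := by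
    by_contra h
    push_neg at h
    exact hd fun a b hab => h a b hab
  -- column j has only nonzero at row k
  have hcol : ∀ a : Fin n, a ≠ k → u a j = 0 := by
    intro a hak
    have h : (u * Matrix.single j j (1:ℂ) * uᴴ) a k = 0 := (hnorm _ (stdDiag j)).1 hak
    rw [uEuH] at h
    have hs : star (u k j) ≠ 0 := star_ne_zero.mpr hukj
    exact (mul_eq_zero.mp h).resolve_right hs
  -- row k has only nonzero at column j
  have hrow : ∀ b : Fin n, b ≠ j → u k b = 0 := by
    intro b hbj
    have h : (uᴴ * Matrix.single k k (1:ℂ) * u) j b = 0 := (hnorm _ (stdDiag k)).2 hbj.symm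
    rw [uHEu] at h
    exact (mul_eq_zero.mp h).resolve_left (star_ne_zero.mpr hukj)
  -- (u uᴴ) k k = u k j * star (u k j)
  have huuH : (u * uᴴ) k k = u k j * star (u k j) := by
    rw [Matrix.mul_apply]
    rw [Finset.sum_eq_single j]
    · simp [conjTranspose_apply]
    · intro b _ hbj; simp [conjTranspose_apply, hrow b hbj]
    · simp
  -- partial isometry at (k, j)
  have hpe : (u * uᴴ * u) k j = u k j := by rw [hpi]
  have hsum : (u * uᴴ * u) k j = (u * uᴴ) k k * u k j := by
    rw [Matrix.mul_apply, Finset.sum_eq_single k]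
    · intro a _ hak; simp [hcol a hak]
    · simp
  have hpe2 : (u * uᴴ) k k * u k j = u k j := by rw [← hsum, hpe]
  have hmod : star (u k j) * u k j = 1 := by
    rw [huuH] at hpe2
    have h3 : u k j * (star (u k j) * u k j - 1) = 0 := by linear_combination hpe2
    exact sub_eq_zero.mp ((mul_eq_zero.mp h3).resolve_left hukj)
  refine ⟨j, ?_, ?_⟩
  · rw [Matrix.mul_apply, Finset.sum_eq_single k]
    · simpa [conjTranspose_apply] using hmod
    · intro a _ hak; simp [conjTranspose_apply, hcol a hak]
    · simp
  · ext a b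
    rw [Matrix.mul_apply, Finset.sum_eq_single j]
    · rw [uEuH, hcol j hkj.symm]; simp
    · intro c _ hcj
      simp [Matrix.single, hcj, Ne.symm hcj]
    · simp
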